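/- Let G = S₃ × D_n (n ≥ 3), S = {a,b,c} with a = ((1 2),1), b = ((1 3),z), c = ((2 3),zr), and X_n = Cay(G,S). Then the function f on G defined by f(h₁,h₂) = ∅ if h₁ ∈ A₃, {1} if h₁ = (1 2), {2} if h₁ = (2 3), {3} if h₁ = (1 3), is a 3-rainbow dominating function on X_n of weight 6n = |G|/2; hence X_n is a 3-RDR graph. -/

import Mathlib

open SimpleGraph Finset

/-- A `k`-rainbow dominating function on a graph `G`: whenever `f v = ∅`,
every color appears on some neighbor of `v`. -/
def IsKRDF {V : Type*} (G : SimpleGraph V) (k : ℕ) (f : V → Finset (Fin k)) : Prop :=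
  ∀ v, f v = ∅ → ∀ c : Fin k, ∃ u, G.Adj v u ∧ c ∈ f u

/-- The weight of a rainbow dominating function. -/
def rdfWeight {V : Type*} [Fintype V] {k : ℕ} (f : V → Finset (Fin k)) : ℕ :=
  ∑ v, (f v).card

/-- The `k`-rainbow domination number of `G`. -/
noncomputable def rainbowDomNum {V : Type*} [Fintype V] (G : SimpleGraph V) (k : ℕ) : ℕ :=
  sInf {w | ∃ f, IsKRDF G k f ∧ rdfWeight f = w}

/-- The generator `a = ((1 2), 1)` of `S₃ × Dₙ`. -/
def genA (n : ℕ) : Equiv.Perm (Fin 3) × DihedralGroup n := (Equiv.swap 0 1, 1)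

/-- The generator `b = ((1 3), z)` of `S₃ × Dₙ`. -/
def genB (n : ℕ) : Equiv.Perm (Fin 3) × DihedralGroup n :=
  (Equiv.swap 0 2, DihedralGroup.sr 0)

/-- The generator `c = ((2 3), z r)` of `S₃ × Dₙ`. -/
def genC (n : ℕ) : Equiv.Perm (Fin 3) × DihedralGroup n :=
  (Equiv.swap 1 2, DihedralGroup.sr 1)

/-- The Cayley graph `Xₙ = Cay(S₃ × Dₙ, {a, b, c})`. -/
def XCay (n : ℕ) : SimpleGraph (Equiv.Perm (Fin 3) × DihedralGroup n) where
  Adj g h := g ≠ h ∧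
    ((∃ s ∈ ({genA n, genB n, genC n} : Set _), h = g * s) ∨
     (∃ s ∈ ({genA n, genB n, genC n} : Set _), g = h * s))
  symm := ⟨by rintro g h ⟨hne, hs⟩; exact ⟨hne.symm, hs.symm⟩⟩
  loopless := ⟨fun g h => h.1 rfl⟩

/-- The coloring of `S₃ × Dₙ`: `∅` on even first coordinates, and colors
`1, 2, 3` (realized as `0, 1, 2 : Fin 3`) on the transpositions
`(1 2), (2 3), (1 3)` respectively. -/
def cayColor (n : ℕ) (g : Equiv.Perm (Fin 3) × DihedralGroup n) : Finset (Fin 3) :=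
  if Equiv.Perm.sign g.1 = 1 then ∅
  else if g.1 = Equiv.swap 0 1 then {0}
  else if g.1 = Equiv.swap 1 2 then {1}
  else {2}

-- ### Auxiliary material

/-- The color function depends only on the `S₃` component. -/
def col (p : Equiv.Perm (Fin 3)) : Finset (Fin 3) :=
  if Equiv.Perm.sign p = 1 then ∅
  else if p = Equiv.swap 0 1 then {0}
  else if p = Equiv.swap 1 2 then {1}
  else {2}

lemma cayColor_eq (n : ℕ) (g : Equiv.Perm (Fin 3) × DihedralGroup n) :
    cayColor n g = col g.1 := rfl

lemma gen_sq (n : ℕ) : ∀ s ∈ ({genA n, genB n, genC n} : Set _), s * s = 1 := by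
  rintro s (rfl | rfl | rfl) <;>
    simp [genA, genB, genC, Prod.ext_iff, Equiv.swap_mul_self,
      Prod.mk_mul_mk]

lemma gen_ne_one (n : ℕ) : ∀ s ∈ ({genA n, genB n, genC n} : Set _), s ≠ 1 := by
  have h01 : (Equiv.swap 0 1 : Equiv.Perm (Fin 3)) ≠ 1 := by decide
  have h02 : (Equiv.swap 0 2 : Equiv.Perm (Fin 3)) ≠ 1 := by decide
  have h12 : (Equiv.swap 1 2 : Equiv.Perm (Fin 3)) ≠ 1 := by decide
  rintro s (rfl | rfl | rfl) h
  · exact h01 (congrArg Prod.fst h)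
  · exact h02 (congrArg Prod.fst h)
  · exact h12 (congrArg Prod.fst h)

lemma adj_iff {n : ℕ} {g h : Equiv.Perm (Fin 3) × DihedralGroup n} :
    (XCay n).Adj g h ↔ g ≠ h ∧ ∃ s ∈ ({genA n, genB n, genC n} : Set _), h = g * s := by
  change (g ≠ h ∧ ((∃ s ∈ ({genA n, genB n, genC n} : Set _), h = g * s) ∨
    (∃ s ∈ ({genA n, genB n, genC n} : Set _), g = h * s))) ↔ _
  constructor
  · rintro ⟨hne, ⟨s, hs, rfl⟩ | ⟨s, hs, rfl⟩⟩
    · exact ⟨hne, s, hs, rfl⟩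
    · exact ⟨hne, s, hs, by rw [mul_assoc, gen_sq n s hs, mul_one]⟩
  · rintro ⟨hne, s, hs, rfl⟩
    exact ⟨hne, Or.inl ⟨s, hs, rfl⟩⟩

lemma adj_mul_gen {n : ℕ} (g : Equiv.Perm (Fin 3) × DihedralGroup n)
    {s} (hs : s ∈ ({genA n, genB n, genC n} : Set _)) : (XCay n).Adj g (g * s) := by
  refine adj_iff.mpr ⟨fun h => gen_ne_one n s hs ?_, s, hs, rfl⟩
  exact (left_eq_mul.mp h)

lemma dom_aux : ∀ p : Equiv.Perm (Fin 3), Equiv.Perm.sign p = 1 → ∀ c : Fin 3,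
    c ∈ col (p * Equiv.swap 0 1) ∨ c ∈ col (p * Equiv.swap 0 2) ∨
    c ∈ col (p * Equiv.swap 1 2) := by decide

lemma col_empty : ∀ p : Equiv.Perm (Fin 3), col p = ∅ → Equiv.Perm.sign p = 1 := by decide

lemma col_sum : ∑ p : Equiv.Perm (Fin 3), (col p).card = 3 := by decide

lemma isKRDF_cayColor (n : ℕ) : IsKRDF (XCay n) 3 (cayColor n) := by
  intro v hv c
  have hsign := col_empty v.1 (by rw [← cayColor_eq]; exact hv)
  rcases dom_aux v.1 hsign c with h | h | h
  · exact ⟨v * genA n, adj_mul_gen v (by left; rfl), h⟩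
  · exact ⟨v * genB n, adj_mul_gen v (by right; left; rfl), h⟩
  · exact ⟨v * genC n, adj_mul_gen v (by right; right; rfl), h⟩

lemma weight_cayColor (n : ℕ) [NeZero n] : rdfWeight (cayColor n) = 6 * n := by
  unfold rdfWeight
  rw [Fintype.sum_prod_type]
  simp only [cayColor_eq]
  have : ∀ p : Equiv.Perm (Fin 3),
      ∑ _d : DihedralGroup n, (col p).card = 2 * n * (col p).card := by
    intro p
    rw [Finset.sum_const, smul_eq_mul, Finset.card_univ, DihedralGroup.card]
  simp_rw [this, ← Finset.mul_sum, col_sum]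
  ring

lemma card_G (n : ℕ) [NeZero n] :
    Fintype.card (Equiv.Perm (Fin 3) × DihedralGroup n) = 12 * n := by
  rw [Fintype.card_prod, Fintype.card_perm, DihedralGroup.card, Fintype.card_fin]
  norm_num [Nat.factorial]
  ring

lemma lower_bound (n : ℕ) [NeZero n]
    (f : Equiv.Perm (Fin 3) × DihedralGroup n → Finset (Fin 3))
    (hf : IsKRDF (XCay n) 3 f) : 6 * n ≤ rdfWeight f := by
  classical
  set w := rdfWeight f with hw
  set E := Finset.univ.filter (fun v => f v = ∅) with hE
  set NE := Finset.univ.filter (fun v => ¬ f v = ∅) with hNE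
  have hsplit : E.card + NE.card = 12 * n := by
    rw [hE, hNE, Finset.card_filter_add_card_filter_not, Finset.card_univ, card_G]
  have hNEw : NE.card ≤ w := by
    calc NE.card = ∑ _v ∈ NE, 1 := by rw [Finset.sum_const, smul_eq_mul, mul_one]
    _ ≤ ∑ v ∈ NE, (f v).card := by
        refine Finset.sum_le_sum fun v hv => ?_
        have h1 : f v ≠ ∅ := (Finset.mem_filter.mp hv).2
        exact Nat.one_le_iff_ne_zero.mpr (fun h => h1 (Finset.card_eq_zero.mp h))
    _ ≤ ∑ v, (f v).card := Finset.sum_le_sum_of_subset (Finset.filter_subset _ _)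
  have hEw : E.card ≤ w := by
    set F : (Equiv.Perm (Fin 3) × DihedralGroup n) → Fin 3 →
        Equiv.Perm (Fin 3) × DihedralGroup n := fun v c =>
      if h : f v = ∅ then (hf v h c).choose else v with hF
    have hFspec : ∀ v ∈ E, ∀ c : Fin 3, (XCay n).Adj v (F v c) ∧ c ∈ f (F v c) := by
      intro v hv c
      have h : f v = ∅ := (Finset.mem_filter.mp hv).2
      simp only [hF, dif_pos h]
      exact (hf v h c).choose_spec
    have hcount : (E ×ˢ (Finset.univ : Finset (Fin 3))).card =
        ∑ u, ((E ×ˢ Finset.univ).filter (fun x => F x.1 x.2 = u)).card :=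
      Finset.card_eq_sum_card_fiberwise (fun x _ => Finset.mem_univ _)
    have hfiber : ∀ u, ((E ×ˢ (Finset.univ : Finset (Fin 3))).filter
        (fun x => F x.1 x.2 = u)).card ≤ 3 * (f u).card := by
      intro u
      have hsub : (E ×ˢ (Finset.univ : Finset (Fin 3))).filter (fun x => F x.1 x.2 = u) ⊆
          ({u * genA n, u * genB n, u * genC n} :
            Finset (Equiv.Perm (Fin 3) × DihedralGroup n)) ×ˢ (f u) := by
        intro x hx
        rw [Finset.mem_filter, Finset.mem_product] at hx
        obtain ⟨⟨hv, -⟩, hu⟩ := hx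
        obtain ⟨hadj, hc⟩ := hFspec x.1 hv x.2
        rw [hu] at hadj hc
        rw [Finset.mem_product]
        refine ⟨?_, hc⟩
        obtain ⟨-, s, hs, heq⟩ := adj_iff.mp hadj.symm
        rcases hs with rfl | rfl | rfl
        · simp [heq]
        · simp [heq]
        · simp [heq]
      calc _ ≤ (({u * genA n, u * genB n, u * genC n} :
            Finset (Equiv.Perm (Fin 3) × DihedralGroup n)) ×ˢ (f u)).card :=
            Finset.card_le_card hsub
      _ = ({u * genA n, u * genB n, u * genC n} :
            Finset (Equiv.Perm (Fin 3) × DihedralGroup n)).card * (f u).card :=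
            Finset.card_product _ _
      _ ≤ 3 * (f u).card := by
            refine Nat.mul_le_mul_right _ ?_
            calc _ ≤ ({u * genB n, u * genC n} :
                  Finset (Equiv.Perm (Fin 3) × DihedralGroup n)).card + 1 :=
                  Finset.card_insert_le _ _
            _ ≤ (({u * genC n} :
                  Finset (Equiv.Perm (Fin 3) × DihedralGroup n)).card + 1) + 1 :=
                  Nat.add_le_add_right (Finset.card_insert_le _ _) 1
            _ ≤ 3 := by simp
    have h3 : 3 * E.card ≤ 3 * w := by
      calc 3 * E.card = (E ×ˢ (Finset.univ : Finset (Fin 3))).card := by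
            rw [Finset.card_product]; simp [mul_comm]
      _ = _ := hcount
      _ ≤ ∑ u, 3 * (f u).card := Finset.sum_le_sum fun u _ => hfiber u
      _ = 3 * w := by rw [← Finset.mul_sum]; rfl
    omega
  omega

/-- For `n ≥ 3`, the function `cayColor` is a `3`-rainbow dominating function on
`Xₙ = Cay(S₃ × Dₙ, {a,b,c})` of weight `6 n = |G| / 2`; hence `Xₙ` is a `3`-RDR
graph. -/
theorem XCay_is3RDR (n : ℕ) [NeZero n] (hn : 3 ≤ n) :
    IsKRDF (XCay n) 3 (cayColor n) ∧
    rdfWeight (cayColor n) = 6 * n ∧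
    2 * rainbowDomNum (XCay n) 3 =
      Fintype.card (Equiv.Perm (Fin 3) × DihedralGroup n) := by

  refine ⟨isKRDF_cayColor n, weight_cayColor n, ?_⟩
  have hmem : 6 * n ∈ {w | ∃ f, IsKRDF (XCay n) 3 f ∧ rdfWeight f = w} :=
    ⟨cayColor n, isKRDF_cayColor n, weight_cayColor n⟩
  have hnum : rainbowDomNum (XCay n) 3 = 6 * n := by
    apply le_antisymm (Nat.sInf_le hmem)
    refine le_csInf ⟨_, hmem⟩ ?_
    rintro w ⟨f, hf, rfl⟩
    exact lower_bound n f hf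
  rw [hnum, card_G]
  ring
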